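/- For x ∈ W_n with B_n^x = k (i.e., the only x-constants are scalars), the minimal polynomial of the linear operator ρ(x) (the action of x on B_n) equals the characteristic polynomial P(t,x) = t^{p^n} − Σ_{i=0}^{n-1} φ_i(x)t^{p^i}; in particular the minimal polynomial of ρ(x) has degree p^n. -/

import Mathlib

open Finset Polynomial

section AuxLemmas

open Module

variable {k : Type*} [Field k] {V : Type*} [AddCommGroup V] [Module k V] [FiniteDimensional k V]

private lemma aux_finrank_ker_comp_le (f g : V →ₗ[k] V) :
    finrank k (LinearMap.ker (f ∘ₗ g)) ≤
      finrank k (LinearMap.ker f) + finrank k (LinearMap.ker g) := by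
  set φ : LinearMap.ker (f ∘ₗ g) →ₗ[k] V := g.domRestrict (LinearMap.ker (f ∘ₗ g)) with hφ
  have h1 : finrank k (LinearMap.range φ) + finrank k (LinearMap.ker φ) =
      finrank k (LinearMap.ker (f ∘ₗ g)) := LinearMap.finrank_range_add_finrank_ker φ
  have h2 : LinearMap.range φ ≤ LinearMap.ker f := by
    rintro v ⟨⟨w, hw⟩, rfl⟩
    simpa [φ] using hw
  have h3 : finrank k (LinearMap.range φ) ≤ finrank k (LinearMap.ker f) :=
    Submodule.finrank_mono h2
  have h4 : finrank k (LinearMap.ker φ) ≤ finrank k (LinearMap.ker g) := by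
    set ψ : LinearMap.ker φ →ₗ[k] V :=
      (LinearMap.ker (f ∘ₗ g)).subtype ∘ₗ (LinearMap.ker φ).subtype with hψ
    have hinj : Function.Injective ψ :=
      (Submodule.injective_subtype _).comp (Submodule.injective_subtype _)
    have hr : LinearMap.range ψ ≤ LinearMap.ker g := by
      rintro v ⟨⟨⟨w, hw⟩, hw2⟩, rfl⟩
      simpa [ψ, φ] using hw2
    calc finrank k (LinearMap.ker φ) = finrank k (LinearMap.range ψ) :=
          (LinearMap.finrank_range_of_inj hinj).symm
      _ ≤ finrank k (LinearMap.ker g) := Submodule.finrank_mono hr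
  omega

private lemma aux_finrank_ker_pow_le (f : V →ₗ[k] V) (j : ℕ) :
    finrank k (LinearMap.ker (f ^ j)) ≤ j * finrank k (LinearMap.ker f) := by
  induction j with
  | zero => simp [Module.End.one_eq_id, LinearMap.ker_id]
  | succ m ih =>
      have : (f ^ (m + 1)) = f ∘ₗ (f ^ m) := by
        rw [pow_succ']; rfl
      rw [this]
      calc finrank k (LinearMap.ker (f ∘ₗ f ^ m)) ≤
            finrank k (LinearMap.ker f) + finrank k (LinearMap.ker (f ^ m)) :=
          aux_finrank_ker_comp_le f (f ^ m)
        _ ≤ finrank k (LinearMap.ker f) + m * finrank k (LinearMap.ker f) := by omega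
        _ = (m + 1) * finrank k (LinearMap.ker f) := by ring

private lemma aux_exists_eigenvector (A : V →ₗ[k] V) (l : k)
    (hl : (LinearMap.charpoly A).IsRoot l) :
    ∃ v : V, v ≠ 0 ∧ A v = l • v := by
  classical
  set b := Module.finBasis k V
  set M := LinearMap.toMatrix b b A with hM
  have h1 : LinearMap.charpoly A = M.charpoly := (LinearMap.charpoly_toMatrix A b).symm
  have h2 : (LinearMap.charpoly A).eval l = ((Matrix.charmatrix M).map (eval l)).det := by
    rw [h1, Matrix.charpoly]
    exact (RingHom.map_det (evalRingHom l) (Matrix.charmatrix M)).symm ▸ rfl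
  have h3 : (Matrix.charmatrix M).map (eval l) = l • (1 : Matrix _ _ k) - M := by
    ext i j
    by_cases h : i = j
    · subst h; simp [Matrix.charmatrix_apply_eq, Matrix.one_apply]
    · simp [Matrix.charmatrix_apply_ne _ _ _ h, Matrix.one_apply, h]
  have h4 : LinearMap.toMatrix b b (l • (1 : V →ₗ[k] V) - A) = l • 1 - M := by
    rw [map_sub, map_smul, hM]
    congr 1
    rw [Module.End.one_eq_id, LinearMap.toMatrix_id]
  have hdet : LinearMap.det (l • (1 : V →ₗ[k] V) - A) = 0 := by
    rw [← LinearMap.det_toMatrix b, h4, ← h3, ← h2]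
    exact hl
  have hbot := LinearMap.bot_lt_ker_of_det_eq_zero hdet
  obtain ⟨v, hv, hv0⟩ := (Submodule.ne_bot_iff _).mp hbot.ne'
  refine ⟨v, hv0, ?_⟩
  have := LinearMap.mem_ker.mp hv
  simp only [LinearMap.sub_apply, LinearMap.smul_apply, Module.End.one_apply] at this
  exact (sub_eq_zero.mp this).symm

private lemma aux_dimK (A : V →ₗ[k] V) (N : ℕ) (hfin : finrank k V = N) :
    finrank k (LinearMap.ker (A ^ N)) = (LinearMap.charpoly A).natTrailingDegree := by
  have h1 := LinearMap.finrank_maxGenEigenspace_zero_eq (A : Module.End k V)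
  have hEq : Module.End.maxGenEigenspace (A : Module.End k V) 0 = LinearMap.ker (A ^ N) := by
    rw [Module.End.maxGenEigenspace_eq_genEigenspace_finrank, hfin,
      Module.End.genEigenspace_nat]
    simp
  rw [← hEq]
  exact h1

end AuxLemmas

private lemma aux_comp_translate {k : Type*} [Field k] (p n : ℕ) [Fact (Nat.Prime p)] [CharP k p]
    (c : Fin n → k) (l : k)
    (P : k[X]) (hP : P = X ^ (p ^ n) - ∑ i : Fin n, C (c i) * X ^ (p ^ (i : ℕ))) :
    P.comp (X + C l) = P + C (P.eval l) := by
  have hterm : ∀ j : ℕ, ((X : k[X]) + C l) ^ p ^ j = X ^ p ^ j + C (l ^ p ^ j) := by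
    intro j
    rw [add_pow_char_pow, ← C_pow]
  have hcompeq : ∀ r : k[X], r.comp (X + C l) = aeval (X + C l) r := by
    intro r
    rw [aeval_def, eval₂_eq_eval_map]
    simp [Polynomial.comp, eval₂_eq_eval_map]
  rw [hcompeq, hP]
  simp only [map_sub, map_pow, map_sum, map_mul, aeval_X, aeval_C]
  rw [hterm]
  simp only [hterm]
  have : (algebraMap k k[X]) = (C : k →+* k[X]) := rfl
  rw [this]
  simp only [eval_sub, eval_pow, eval_X, eval_finset_sum, eval_mul, eval_C]
  rw [map_sub, map_sum]
  simp only [mul_add, Finset.sum_add_distrib, map_pow, map_mul]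
  ring

private lemma aux_natDegree {k : Type*} [Field k] (p n : ℕ) [Fact (Nat.Prime p)]
    (c : Fin n → k)
    (P : k[X]) (hP : P = X ^ (p ^ n) - ∑ i : Fin n, C (c i) * X ^ (p ^ (i : ℕ))) :
    P.natDegree = p ^ n := by
  have hp1 : 1 < p := (Fact.out : Nat.Prime p).one_lt
  have hdeg : (∑ i : Fin n, C (c i) * X ^ (p ^ (i : ℕ))).degree < ((p ^ n : ℕ) : WithBot ℕ) := by
    refine lt_of_le_of_lt (degree_sum_le _ _) ?_
    rw [Finset.sup_lt_iff (by exact_mod_cast WithBot.bot_lt_coe _)]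
    intro i _
    refine lt_of_le_of_lt (degree_C_mul_X_pow_le _ _) ?_
    exact_mod_cast Nat.pow_lt_pow_right hp1 i.2
  have hdg : P.degree = ((p ^ n : ℕ) : WithBot ℕ) := by
    rw [hP, sub_eq_add_neg, degree_add_eq_left_of_degree_lt, degree_X_pow]
    rwa [degree_neg, degree_X_pow]
  exact natDegree_eq_of_degree_eq_some hdg

private lemma aux_key (k : Type*) [Field k] (B : Type*) [CommRing B] [Algebra k B]
    [Module.Finite k B]
    (x : Derivation k B B) (q NN : ℕ)
    (hconst : ∀ f : B, x f = 0 ↔ ∃ c : k, f = algebraMap k B c)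
    (m : k[X]) (hm0 : m ≠ 0) (haev : aeval (x : B →ₗ[k] B) m = 0)
    (hdimK : Module.finrank k (LinearMap.ker ((x : B →ₗ[k] B) ^ NN)) = q)
    (hker1 : Module.finrank k (LinearMap.ker (x : B →ₗ[k] B)) = 1)
    (l : k) (f : B) (hf0 : f ≠ 0) (hfeig : (x : B →ₗ[k] B) f = l • f) :
    (X - C l) ^ q ∣ m := by
  classical
  have hFD : FiniteDimensional k B := ‹Module.Finite k B›
  set A : B →ₗ[k] B := (x : B →ₗ[k] B) with hA
  rw [X_sub_C_pow_dvd_iff]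
  set mt : k[X] := m.comp (X + C l) with hmt
  have hmt0 : mt ≠ 0 := comp_X_add_C_ne_zero_iff.mpr hm0
  have hXe : (X : k[X]) ^ (rootMultiplicity 0 mt) ∣ mt := by
    simpa using pow_rootMultiplicity_dvd mt 0
  have hnd : ¬ (X : k[X]) ^ (rootMultiplicity 0 mt + 1) ∣ mt := by
    simpa using pow_rootMultiplicity_not_dvd hmt0 0
  obtain ⟨e', he'⟩ : ∃ e', e' = rootMultiplicity 0 mt := ⟨_, rfl⟩
  rw [← he'] at hXe hnd
  obtain ⟨u, hu⟩ := hXe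
  have hu0 : u.eval 0 ≠ 0 := by
    intro h
    apply hnd
    obtain ⟨w, hw⟩ := dvd_iff_isRoot.mpr (show u.IsRoot 0 from h)
    rw [map_zero, sub_zero] at hw
    exact ⟨w, by rw [hu, hw, pow_succ]; ring⟩
  suffices hqe : q ≤ e' by
    exact dvd_trans (pow_dvd_pow X hqe) ⟨u, hu⟩
  by_contra hlt
  push_neg at hlt
  set Nop : B →ₗ[k] B := A - l • 1 with hNop
  have hψ1 : ∀ b : B, Nop (f * b) = f * (A b) := by
    intro b
    have hleib : x (f * b) = f • x b + b • x f := x.leibniz f b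
    have hxf : x f = l • f := hfeig
    have h1 : A (f * b) = f * (A b) + l • (f * b) := by
      show x (f * b) = f * (x b) + l • (f * b)
      rw [hleib, hxf, smul_eq_mul, smul_eq_mul, mul_smul_comm, mul_comm b f]
    rw [hNop, LinearMap.sub_apply, LinearMap.smul_apply, Module.End.one_apply, h1]
    abel
  have hψpow : ∀ (j : ℕ) (b : B), (Nop ^ j) (f * b) = f * ((A ^ j) b) := by
    intro j
    induction j with
    | zero => intro b; simp
    | succ i ih =>
        intro b
        rw [pow_succ', pow_succ', Module.End.mul_apply, Module.End.mul_apply, ih, hψ1]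
  have hψpoly : ∀ (h : k[X]) (b : B), (aeval Nop h) (f * b) = f * ((aeval A h) b) := by
    intro h
    induction h using Polynomial.induction_on' with
    | add r s hr hs => intro b; simp [hr b, hs b, mul_add]
    | monomial i a =>
        intro b
        rw [aeval_monomial, aeval_monomial, Module.End.mul_apply, Module.End.mul_apply,
          hψpow i b, Module.algebraMap_end_apply, Module.algebraMap_end_apply,
          mul_smul_comm]
  have hNmt : aeval Nop mt = 0 := by
    rw [hmt, aeval_comp]
    have h2 : aeval Nop (X + C l) = A := by
      rw [map_add, aeval_X, aeval_C, hNop, Module.algebraMap_end_eq_smul_id]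
      rw [Module.End.one_eq_id]
      abel
    rw [h2, haev]
  have hannihil : ∀ b : B, f * ((aeval A mt) b) = 0 := by
    intro b
    have h3 := hψpoly mt b
    rw [hNmt] at h3
    simpa using h3.symm
  set K : Submodule k B := LinearMap.ker (A ^ NN) with hK
  have hcop : IsCoprime ((X : k[X]) ^ NN) u := by
    refine IsCoprime.pow_left ?_
    refine (Polynomial.irreducible_X.coprime_iff_not_dvd).mpr ?_
    rw [X_dvd_iff]
    rwa [coeff_zero_eq_eval_zero]
  obtain ⟨a, b, hab⟩ := hcop
  have huinj : ∀ v, v ∈ K → (aeval A u) v = 0 → v = 0 := by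
    intro v hv huv
    have h1 : (aeval A (a * X ^ NN + b * u)) v = v := by rw [hab, map_one, Module.End.one_apply]
    rw [map_add, map_mul, map_mul, map_pow, aeval_X, LinearMap.add_apply,
      Module.End.mul_apply, Module.End.mul_apply, LinearMap.mem_ker.mp hv, huv] at h1
    simpa using h1.symm
  have hmapsto : ∀ v ∈ K, (aeval A u) v ∈ K := by
    intro v hv
    rw [hK, LinearMap.mem_ker]
    have hcm : (A ^ NN) * (aeval A u) = (aeval A u) * (A ^ NN) := by
      have h1 : (A : B →ₗ[k] B) ^ NN = aeval A ((X : k[X]) ^ NN) := by rw [map_pow, aeval_X]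
      rw [h1, ← map_mul, ← map_mul, mul_comm]
    have := congrArg (fun g : B →ₗ[k] B => g v) hcm
    simp only [Module.End.mul_apply] at this
    rw [this, LinearMap.mem_ker.mp hv, map_zero]
  set uK : K →ₗ[k] K := (aeval A u).restrict hmapsto with huK
  have huKinj : Function.Injective uK := by
    rw [← LinearMap.ker_eq_bot, Submodule.eq_bot_iff]
    rintro ⟨v, hv⟩ hker
    have h5 : (aeval A u) v = 0 := congrArg Subtype.val (LinearMap.mem_ker.mp hker)
    exact Subtype.ext (huinj v hv h5)
  have huKsurj : Function.Surjective uK := LinearMap.injective_iff_surjective.mp huKinj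
  have hfK : ∀ w, w ∈ K → f * ((A ^ e') w) = 0 := by
    intro w hw
    obtain ⟨⟨v, hv⟩, hvw⟩ := huKsurj ⟨w, hw⟩
    have hw' : (aeval A u) v = w := congrArg Subtype.val hvw
    have h2 : (A ^ e') w = (aeval A mt) v := by
      rw [← hw', hu, map_mul, map_pow, aeval_X, Module.End.mul_apply]
    rw [h2]
    exact hannihil v
  have hKe : ∀ w ∈ K, (A ^ e') w = 0 := by
    intro w hw
    by_contra hne
    set g : B := (A ^ e') w with hg
    have hcm2 : ∀ i j : ℕ, (A ^ i) ((A ^ j) w) = (A ^ j) ((A ^ i) w) := by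
      intro i j
      rw [← Module.End.mul_apply, ← Module.End.mul_apply, ← pow_add, ← pow_add, add_comm]
    have hgK : (A ^ NN) g = 0 := by
      rw [hg, hcm2 NN e', LinearMap.mem_ker.mp hw, map_zero]
    have hPex : ∃ j, (A ^ j) g = 0 := ⟨NN, hgK⟩
    set j := Nat.find hPex with hjdef
    have hj : (A ^ j) g = 0 := Nat.find_spec hPex
    have hj0 : j ≠ 0 := by
      intro h0
      rw [h0, pow_zero, Module.End.one_apply] at hj
      exact hne hj
    set v : B := (A ^ (j - 1)) g with hv
    have hvne : v ≠ 0 := Nat.find_min hPex (Nat.sub_lt (Nat.pos_of_ne_zero hj0) one_pos)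
    have hAv : A v = 0 := by
      rw [hv, ← Module.End.mul_apply, ← pow_succ']
      rw [Nat.sub_add_cancel (Nat.one_le_iff_ne_zero.mpr hj0)]
      exact hj
    obtain ⟨c, hc⟩ := (hconst v).mp hAv
    have hc0 : c ≠ 0 := fun h0 => hvne (by rw [hc, h0, map_zero])
    have hvmul : f * v = 0 := by
      have h3 : v = (A ^ e') ((A ^ (j - 1)) w) := by
        rw [hv, hg, hcm2 (j - 1) e']
      have h4 : (A ^ (j - 1)) w ∈ K := by
        rw [hK, LinearMap.mem_ker, hcm2 NN (j - 1), LinearMap.mem_ker.mp hw, map_zero]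
      rw [h3]
      exact hfK _ h4
    rw [hc, Algebra.algebraMap_eq_smul_one, mul_smul_comm, mul_one] at hvmul
    exact hf0 ((smul_eq_zero.mp hvmul).resolve_left hc0)
  have hKle : K ≤ LinearMap.ker (A ^ e') := fun w hw => LinearMap.mem_ker.mpr (hKe w hw)
  have hd1 : Module.finrank k K ≤ Module.finrank k (LinearMap.ker (A ^ e')) :=
    Submodule.finrank_mono hKle
  have hd2 := aux_finrank_ker_pow_le A e'
  rw [hker1, mul_one] at hd2
  rw [hK] at hd1
  rw [hdimK] at hd1
  omega

/-- For `x ∈ W_n` with `B_n^x = k` (the only `x`-constants are scalars), the minimal polynomial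
of the linear operator `ρ(x)` equals the characteristic polynomial
`P(t,x) = t^{p^n} − Σ_{i=0}^{n-1} φ_i(x) t^{p^i}`; in particular it has degree `p^n`. -/
theorem minimal_polynomial_eq_characteristic_polynomial
    (k : Type*) [Field k] [IsAlgClosed k] (p n : ℕ) [Fact (Nat.Prime p)] [CharP k p]
    (hp : 3 < p) (hn : 3 ≤ n)
    (B : Type*) [CommRing B] [Algebra k B] [Module.Finite k B]
    (e : (MvPolynomial (Fin n) k ⧸
        Ideal.span (Set.range fun i : Fin n => (MvPolynomial.X i : MvPolynomial (Fin n) k) ^ p)) ≃ₐ[k] B)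
    (φ : Fin n → Derivation k B B → k)
    (hφ : ∀ y : Derivation k B B,
      LinearMap.charpoly (y : B →ₗ[k] B) =
        X ^ (p ^ n) - ∑ i : Fin n, C (φ i y) * X ^ (p ^ (i : ℕ)))
    (x : Derivation k B B)
    (hconst : ∀ f : B, x f = 0 ↔ ∃ c : k, f = algebraMap k B c) :
    minpoly k ((x : B →ₗ[k] B)) = LinearMap.charpoly (x : B →ₗ[k] B) ∧
      (minpoly k ((x : B →ₗ[k] B))).natDegree = p ^ n := by
  classical
  have hFD : FiniteDimensional k B := ‹Module.Finite k B›
  set A : B →ₗ[k] B := (x : B →ₗ[k] B) with hAdef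
  set P : k[X] := LinearMap.charpoly A with hPdef
  set m : k[X] := minpoly k A with hmdef
  have hPx : P = X ^ (p ^ n) - ∑ i : Fin n, C (φ i x) * X ^ (p ^ (i : ℕ)) := hφ x
  -- B is nontrivial
  have hntB : Nontrivial B := by
    set I := Ideal.span (Set.range fun i : Fin n =>
      (MvPolynomial.X i : MvPolynomial (Fin n) k) ^ p) with hI
    have hIne : I ≠ ⊤ := by
      intro htop
      have h1 : (1 : MvPolynomial (Fin n) k) ∈ I := htop ▸ Submodule.mem_top
      have hle : I ≤ RingHom.ker (MvPolynomial.eval (fun _ : Fin n => (0 : k))) := by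
        rw [hI, Ideal.span_le]
        rintro _ ⟨i, rfl⟩
        simp only [SetLike.mem_coe, RingHom.mem_ker, map_pow, MvPolynomial.eval_X]
        exact zero_pow (Fact.out : Nat.Prime p).ne_zero
      have h2 := hle h1
      rw [RingHom.mem_ker, map_one] at h2
      exact one_ne_zero h2
    have hq : Nontrivial (MvPolynomial (Fin n) k ⧸ I) := Ideal.Quotient.nontrivial_iff.mpr hIne
    obtain ⟨a, b, hab⟩ := hq
    exact ⟨e a, e b, fun h => hab (e.injective h)⟩
  -- the kernel of A consists of the scalars
  have hkerA : LinearMap.ker A = Submodule.span k {(1 : B)} := by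
    ext v
    rw [LinearMap.mem_ker, Submodule.mem_span_singleton]
    show x v = 0 ↔ _
    rw [hconst v]
    constructor
    · rintro ⟨c, rfl⟩; exact ⟨c, by rw [Algebra.algebraMap_eq_smul_one]⟩
    · rintro ⟨c, rfl⟩; exact ⟨c, by rw [Algebra.algebraMap_eq_smul_one]⟩
  have hker1 : Module.finrank k (LinearMap.ker A) = 1 := by
    rw [hkerA]; exact finrank_span_singleton one_ne_zero
  -- basic facts about P and m
  have hPnat : P.natDegree = p ^ n := aux_natDegree p n _ P hPx
  have hPmonic : P.Monic := LinearMap.charpoly_monic A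
  have hP0 : P ≠ 0 := hPmonic.ne_zero
  have hfinB : Module.finrank k B = p ^ n := by
    rw [← LinearMap.charpoly_natDegree (f := A)]; exact hPnat
  have hInt : IsIntegral k A := Algebra.IsIntegral.isIntegral A
  have hm0 : m ≠ 0 := minpoly.ne_zero hInt
  have hmmonic : m.Monic := minpoly.monic hInt
  have hmP : m ∣ P := LinearMap.minpoly_dvd_charpoly A
  -- every root of P has multiplicity equal to the trailing degree of P
  set q : ℕ := P.natTrailingDegree with hq
  have hrootmult : ∀ l : k, P.IsRoot l → P.rootMultiplicity l = q := by
    intro l hl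
    rw [rootMultiplicity_eq_natTrailingDegree, aux_comp_translate p n _ l P hPx, hl.eq_zero,
      map_zero, add_zero]
  -- the dimension of the generalized 0-eigenspace equals q
  have hdimK : Module.finrank k (LinearMap.ker (A ^ (p ^ n))) = q :=
    aux_dimK A (p ^ n) hfinB
  -- the key step: every root of P contributes a factor (X - C l)^q to m
  have key : ∀ l : k, P.IsRoot l → (X - C l) ^ q ∣ m := by
    intro l hl
    obtain ⟨f, hf0, hfeig⟩ := aux_exists_eigenvector A l hl
    exact aux_key k B x q (p ^ n) hconst m hm0 (minpoly.aeval k A) hdimK hker1 l f hf0 hfeig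
  -- conclusion
  have hroots_le : P.roots ≤ m.roots := by
    rw [Multiset.le_iff_count]
    intro l
    rw [count_roots, count_roots]
    by_cases hl : P.IsRoot l
    · rw [hrootmult l hl]
      exact (le_rootMultiplicity_iff hm0).mpr (key l hl)
    · simp [rootMultiplicity_eq_zero hl]
  have hPm : P ∣ m := by
    have h2 := (Multiset.prod_X_sub_C_dvd_iff_le_roots hm0 P.roots).mpr hroots_le
    rwa [← (IsAlgClosed.splits P).eq_prod_roots_of_monic hPmonic] at h2
  have hEq : m = P := eq_of_monic_of_associated hmmonic hPmonic (associated_of_dvd_dvd hmP hPm)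
  exact ⟨hEq, by rw [hEq]; exact hPnat⟩
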